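/- An infinite word over a pushdown alphabet has at most one infinite maximal abstract path. -/
import Mathlib


inductive SymKind where
  | call | ret | intl
deriving DecidableEq

/-- Well-matched words over a pushdown alphabet, where `k` assigns to each
letter its kind (call, return, or internal). -/
inductive WellMatched {A : Type*} (k : A → SymKind) : List A → Prop
  | nil : WellMatched k []
  | int {a : A} {s : List A} : k a = SymKind.intl → WellMatched k s →
      WellMatched k (a :: s)
  | matched {c r : A} {s s' : List A} : k c = SymKind.call → k r = SymKind.ret →
      WellMatched k s → WellMatched k s' →
      WellMatched k (c :: (s ++ r :: s'))

/-- Number of call symbols in a finite word. -/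
def callCount {A : Type*} (k : A → SymKind) (s : List A) : ℕ :=
  s.countP (fun a => decide (k a = SymKind.call))

/-- Number of return symbols in a finite word. -/
def retCount {A : Type*} (k : A → SymKind) (s : List A) : ℕ :=
  s.countP (fun a => decide (k a = SymKind.ret))

/-- The finite subword `σ[i, j-1]` of the infinite word `σ` (letters at
positions `i, i+1, ..., j-1`). -/
def wordSlice {A : Type*} (σ : ℕ → A) (i j : ℕ) : List A :=
  (List.range (j - i)).map fun n => σ (i + n)

/-- `j` is a matching return of position `i`: `j > i`, `j` is a return
position, and the subword `σ[i+1, j-1]` is well-matched. -/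
def MatchRet {A : Type*} (k : A → SymKind) (σ : ℕ → A) (i j : ℕ) : Prop :=
  i < j ∧ k (σ j) = SymKind.ret ∧ WellMatched k (wordSlice σ (i + 1) j)

/-- The abstract-successor relation `SUCC(abs, σ, i) = j`. -/
def AbsSucc {A : Type*} (k : A → SymKind) (σ : ℕ → A) (i j : ℕ) : Prop :=
  if k (σ i) = SymKind.call then MatchRet k σ i j
  else j = i + 1 ∧ k (σ (i + 1)) ≠ SymKind.ret

/-- `j` is a candidate caller of `i`: a call position `j < i` whose abstract
successor is undefined or greater than `i`. -/
def CallerCand {A : Type*} (k : A → SymKind) (σ : ℕ → A) (i j : ℕ) : Prop :=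
  j < i ∧ k (σ j) = SymKind.call ∧ ∀ m, AbsSucc k σ j m → i < m

/-- `j` is the caller of `i`: the greatest candidate caller. -/
def Caller {A : Type*} (k : A → SymKind) (σ : ℕ → A) (i j : ℕ) : Prop :=
  CallerCand k σ i j ∧ ∀ j', CallerCand k σ i j' → j' ≤ j

/-- `S` is a maximal abstract path (MAP): the set of positions reachable via
the abstract successor from a position `i0` with no abstract predecessor. -/
def IsMAP {A : Type*} (k : A → SymKind) (σ : ℕ → A) (S : Set ℕ) : Prop :=
  ∃ i0, (¬ ∃ p, AbsSucc k σ p i0) ∧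
    S = {j | Relation.ReflTransGen (AbsSucc k σ) i0 j}

/-- The set of positions of the (unique) maximal abstract path visiting `i`. -/
def PosA {A : Type*} (k : A → SymKind) (σ : ℕ → A) (i : ℕ) : Set ℕ :=
  {j | Relation.ReflTransGen (AbsSucc k σ) i j ∨
       Relation.ReflTransGen (AbsSucc k σ) j i}

/-- The set of positions of the caller path of `σ` from `i`. -/
def PosC {A : Type*} (k : A → SymKind) (σ : ℕ → A) (i : ℕ) : Set ℕ :=
  {j | Relation.ReflTransGen (fun a b => Caller k σ a b) i j}

section Aux

variable {A : Type*} {k : A → SymKind} {σ : ℕ → A}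

lemma wm_counts {s : List A} (h : WellMatched k s) : callCount k s = retCount k s := by
  induction h with
  | nil => rfl
  | int ha _ ih =>
    simp [callCount, retCount, List.countP_cons, ha] at *
    omega
  | matched hc hr _ _ ih1 ih2 =>
    simp [callCount, retCount, List.countP_cons, List.countP_append, hc, hr] at *
    omega

lemma wm_prefix {s : List A} (h : WellMatched k s) :
    ∀ t u : List A, s = t ++ u → retCount k t ≤ callCount k t := by
  induction h with
  | nil =>
    intro t u ht
    have : t = [] := by cases t <;> simp_all
    simp [this, callCount, retCount]
  | @int a s ha hs ih =>
    intro t u ht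
    cases t with
    | nil => simp [callCount, retCount]
    | cons b t' =>
      simp only [List.cons_append, List.cons.injEq] at ht
      obtain ⟨rfl, ht⟩ := ht
      have := ih t' u ht
      simp [callCount, retCount, List.countP_cons, ha] at *
      omega
  | @matched c r s s' hc hr hs hs' ih1 ih2 =>
    intro t u ht
    cases t with
    | nil => simp [callCount, retCount]
    | cons b t' =>
      simp only [List.cons_append, List.cons.injEq] at ht
      obtain ⟨rfl, ht⟩ := ht
      rcases List.append_eq_append_iff.mp ht.symm with ⟨a', h1, h2⟩ | ⟨c', h1, h2⟩
      · -- s = t' ++ a'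
        have := ih1 t' a' h1
        simp [callCount, retCount, List.countP_cons, hc] at *
        omega
      · -- t' = s ++ c', r :: s' = c' ++ u
        cases c' with
        | nil =>
          simp only [List.nil_append] at h2
          subst h1
          have h3 := wm_counts hs
          simp [callCount, retCount, List.countP_cons, hc] at *
          omega
        | cons r' c'' =>
          simp only [List.cons_append, List.cons.injEq] at h2
          obtain ⟨rfl, h2⟩ := h2
          subst h1
          have h3 := wm_counts hs
          have h4 := ih2 c'' u h2
          simp [callCount, retCount, List.countP_cons, List.countP_append, hc, hr] at *
          omega

lemma wm_call_return {s : List A} (h : WellMatched k s) :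
    ∀ t c u, s = t ++ c :: u → k c = SymKind.call →
      ∃ v r w, u = v ++ r :: w ∧ k r = SymKind.ret ∧ WellMatched k v := by
  induction h with
  | nil => intro t c u ht; cases t <;> simp_all
  | @int a s ha hs ih =>
    intro t c u ht hc
    cases t with
    | nil => simp_all
    | cons b t' =>
      simp only [List.cons_append, List.cons.injEq] at ht
      exact ih t' c u ht.2 hc
  | @matched c0 r s s' hc0 hr hs hs' ih1 ih2 =>
    intro t c u ht hc
    cases t with
    | nil =>
      simp only [List.nil_append, List.cons.injEq] at ht
      exact ⟨s, r, s', ht.2.symm, hr, hs⟩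
    | cons b t' =>
      simp only [List.cons_append, List.cons.injEq] at ht
      obtain ⟨rfl, ht⟩ := ht
      rcases List.append_eq_append_iff.mp ht.symm with ⟨a', h1, h2⟩ | ⟨c', h1, h2⟩
      · -- s = t' ++ a', c :: u = a' ++ r :: s'
        cases a' with
        | nil =>
          simp only [List.nil_append, List.cons.injEq] at h2
          obtain ⟨rfl, _⟩ := h2
          simp_all
        | cons c1 a'' =>
          simp only [List.cons_append, List.cons.injEq] at h2
          obtain ⟨rfl, rfl⟩ := h2
          obtain ⟨v, r2, w, hv, hr2, hwv⟩ := ih1 t' c a'' h1 hc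
          exact ⟨v, r2, w ++ r :: s', by simp [hv], hr2, hwv⟩
      · -- t' = s ++ c', r :: s' = c' ++ c :: u
        cases c' with
        | nil =>
          simp only [List.nil_append, List.cons.injEq] at h2
          obtain ⟨rfl, _⟩ := h2
          simp_all
        | cons r' c'' =>
          simp only [List.cons_append, List.cons.injEq] at h2
          obtain ⟨rfl, h2⟩ := h2
          exact ih2 c'' c u h2 hc

lemma wordSlice_length (σ : ℕ → A) (i j : ℕ) : (wordSlice σ i j).length = j - i := by
  simp [wordSlice]

lemma wordSlice_append (σ : ℕ → A) {i j l : ℕ} (h1 : i ≤ j) (h2 : j ≤ l) :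
    wordSlice σ i l = wordSlice σ i j ++ wordSlice σ j l := by
  have hl : l - i = (j - i) + (l - j) := by omega
  rw [wordSlice, hl, List.range_add, List.map_append, List.map_map]
  congr 1
  apply List.map_congr_left
  intro n _
  simp only [Function.comp_apply]
  congr 1
  omega

lemma wordSlice_cons (σ : ℕ → A) {i j : ℕ} (h : i < j) :
    wordSlice σ i j = σ i :: wordSlice σ (i + 1) j := by
  have hl : j - i = (j - (i+1)) + 1 := by omega
  rw [wordSlice, hl, List.range_succ_eq_map, List.map_cons, List.map_map]
  simp only [add_zero]
  congr 1
  · rw [wordSlice]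
    apply List.map_congr_left
    intro n _
    simp only [Function.comp_apply, Nat.succ_eq_add_one]
    congr 1
    omega

lemma wordSlice_prefix {i j : ℕ} {t u : List A} (hij : i ≤ j)
    (h : wordSlice σ i j = t ++ u) :
    t = wordSlice σ i (i + t.length) ∧ u = wordSlice σ (i + t.length) j := by
  have hlen : j - i = t.length + u.length := by
    rw [← wordSlice_length σ i j, h, List.length_append]
  have hle : i + t.length ≤ j := by omega
  have hsplit := wordSlice_append σ (by omega : i ≤ i + t.length) hle
  rw [h] at hsplit
  have := List.append_inj hsplit.symm (by rw [wordSlice_length]; omega)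
  exact ⟨this.1.symm, this.2.symm⟩

lemma matchRet_unique {i j j' : ℕ} (h : MatchRet k σ i j) (h' : MatchRet k σ i j') :
    j = j' := by
  rcases h with ⟨hij, hrj, hwm⟩
  rcases h' with ⟨hij', hrj', hwm'⟩
  by_contra hne
  -- wlog j < j'
  wlog hlt : j < j' generalizing j j'
  · exact this hij' hrj' hwm' hij hrj hwm (Ne.symm hne) (by omega)
  have hsplit : wordSlice σ (i+1) j' =
      (wordSlice σ (i+1) j ++ [σ j]) ++ wordSlice σ (j+1) j' := by
    rw [wordSlice_append σ (by omega : i+1 ≤ j) (by omega : j ≤ j'),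
        wordSlice_cons σ (by omega : j < j')]
    simp
  have hpre := wm_prefix hwm' _ _ hsplit
  have hcnt := wm_counts hwm
  simp [callCount, retCount, List.countP_append, List.countP_cons, hrj] at hpre hcnt
  omega

lemma absSucc_lt {i j : ℕ} (h : AbsSucc k σ i j) : i < j := by
  unfold AbsSucc at h
  split at h
  · exact h.1
  · omega

lemma rtg_le {i j : ℕ} (h : Relation.ReflTransGen (AbsSucc k σ) i j) : i ≤ j := by
  induction h with
  | refl => exact le_refl _
  | tail _ h2 ih => exact le_of_lt (lt_of_le_of_lt ih (absSucc_lt h2))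

/-- Inside a well-matched region `[a, b)` whose right end `b` is a return,
any abstract-successor step stays below `b`. -/
lemma step_bound {a b p m : ℕ} (hwm : WellMatched k (wordSlice σ a b))
    (hap : a ≤ p) (hpb : p < b) (hb : k (σ b) = SymKind.ret)
    (h : AbsSucc k σ p m) : m < b := by
  unfold AbsSucc at h
  by_cases hcall : k (σ p) = SymKind.call
  case pos =>
    rw [if_pos hcall] at h
    -- decompose the slice around position p
    have hdec : wordSlice σ a b = wordSlice σ a p ++ σ p :: wordSlice σ (p+1) b := by
      rw [wordSlice_append σ hap (by omega : p ≤ b), wordSlice_cons σ hpb]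
    obtain ⟨v, r, w, hu, hr, hv⟩ := wm_call_return hwm _ _ _ hdec hcall
    -- locate v and r inside σ
    have hpb1 : p + 1 ≤ b := by omega
    obtain ⟨hveq, hreq⟩ := wordSlice_prefix hpb1 hu
    set q := p + 1 + v.length with hq
    have hqb : q < b := by
      have := wordSlice_length σ (p+1) b
      rw [hu] at this
      simp [List.length_append] at this
      omega
    have hrσ : r = σ q := by
      rw [wordSlice_cons σ (show q < b by omega)] at hreq
      exact (List.cons.injEq _ _ _ _ ▸ hreq).1
    have hmr : MatchRet k σ p q := ⟨by omega, hrσ ▸ hr, hveq ▸ hv⟩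
    have := matchRet_unique h hmr
    omega
  case neg =>
    rw [if_neg hcall] at h
    rcases h with ⟨rfl, hnr⟩
    rcases Nat.lt_or_ge (p+1) b with h' | h'
    · exact h'
    · exfalso; apply hnr; have : p + 1 = b := by omega
      rw [this]; exact hb

lemma confine {a b x : ℕ} (hwm : WellMatched k (wordSlice σ a b))
    (hb : k (σ b) = SymKind.ret) (hax : a ≤ x) (hxb : x < b) :
    ∀ y, Relation.ReflTransGen (AbsSucc k σ) x y → y < b := by
  intro y h
  induction h with
  | refl => exact hxb
  | @tail y' y h1 h2 ih =>
    exact step_bound hwm (le_trans hax (rtg_le h1)) ih hb h2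

lemma key (k : A → SymKind) (σ : ℕ → A) {i0 i0' : ℕ} (hle : i0 ≤ i0')
    (hInf : Set.Infinite {j | Relation.ReflTransGen (AbsSucc k σ) i0 j})
    (hnp : ¬ ∃ p, AbsSucc k σ p i0')
    (hInf' : Set.Infinite {j | Relation.ReflTransGen (AbsSucc k σ) i0' j}) :
    i0 = i0' := by
  by_contra hne
  have hlt : i0 < i0' := lt_of_le_of_ne hle hne
  classical
  have hex : ∃ m, Relation.ReflTransGen (AbsSucc k σ) i0 m ∧ i0' ≤ m := by
    obtain ⟨m, hm, hm'⟩ := hInf.exists_gt i0'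
    exact ⟨m, hm, le_of_lt hm'⟩
  set P : ℕ → Prop := fun m => Relation.ReflTransGen (AbsSucc k σ) i0 m ∧ i0' ≤ m with hP
  haveI : DecidablePred P := Classical.decPred P
  set m := Nat.find hex with hm
  obtain ⟨hmS, hmge⟩ := Nat.find_spec hex
  rw [← hm] at hmS hmge
  have hmin : ∀ n, Relation.ReflTransGen (AbsSucc k σ) i0 n → i0' ≤ n → m ≤ n :=
    fun n h1 h2 => Nat.find_le ⟨h1, h2⟩
  -- m ≠ i0' since i0' has no predecessor
  have hmne : i0' < m := by
    rcases lt_or_eq_of_le hmge with h | h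
    · exact h
    · exfalso
      rcases Relation.ReflTransGen.cases_tail hmS with heq | ⟨p, _, hp⟩
      · omega
      · exact hnp ⟨p, h ▸ hp⟩
  -- m has a predecessor p on the path with p < i0'
  rcases Relation.ReflTransGen.cases_tail hmS with heq | ⟨p, hpS, hp⟩
  · omega
  have hpm : p < m := absSucc_lt hp
  have hpi : p < i0' := by
    by_contra hge
    have := hmin p hpS (by omega)
    omega
  -- the step p → m must be a matched call step (since m > p + 1)
  have hcall : k (σ p) = SymKind.call ∧ MatchRet k σ p m := by
    unfold AbsSucc at hp
    by_cases h : k (σ p) = SymKind.call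
    · rw [if_pos h] at hp; exact ⟨h, hp⟩
    · rw [if_neg h] at hp; omega
  obtain ⟨-, -, hretm, hwm⟩ := hcall
  -- the whole second path is confined below m, contradicting its infiniteness
  have hsub : {j | Relation.ReflTransGen (AbsSucc k σ) i0' j} ⊆ Set.Iio m := by
    intro y hy
    exact confine hwm hretm (by omega : p + 1 ≤ i0') (by omega) y hy
  exact hInf' ((Set.finite_Iio m).subset hsub)

theorem infinite_map_unique' {S S' : Set ℕ}
    (h : ∃ i0, (¬ ∃ p, AbsSucc k σ p i0) ∧
      S = {j | Relation.ReflTransGen (AbsSucc k σ) i0 j})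
    (hInf : S.Infinite)
    (h' : ∃ i0, (¬ ∃ p, AbsSucc k σ p i0) ∧
      S' = {j | Relation.ReflTransGen (AbsSucc k σ) i0 j})
    (hInf' : S'.Infinite) : S = S' := by
  obtain ⟨i0, hnp, rfl⟩ := h
  obtain ⟨i0', hnp', rfl⟩ := h'
  rcases le_total i0 i0' with hle | hle
  · rw [key k σ hle hInf hnp' hInf']
  · rw [key k σ hle hInf' hnp hInf]

end Aux

/-- an infinite word over a pushdown alphabet has at most one
infinite maximal abstract path. -/
theorem infinite_map_unique {A : Type*} (k : A → SymKind) (σ : ℕ → A)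
    {S S' : Set ℕ} (h : IsMAP k σ S) (hInf : S.Infinite)
    (h' : IsMAP k σ S') (hInf' : S'.Infinite) : S = S' := by
  exact infinite_map_unique' h hInf h' hInf'
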